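/- arXiv:2404.17090 — 2 statements merged into one kernel-verified Lean document; each statement's English description precedes it below -/
import Mathlib

section
/- Let $(M,g,X)$ satisfy the $m$-quasi-Einstein equation with $M$ closed and $m \neq 0, -2$, and suppose the scalar curvature $R$ is constant. Assume the integral identity $(1 - \frac{4}{m})\int_M \nabla_X \mathrm{div}\,X\,dV = (\frac{1}{m}+\frac{1}{2})\int_M |\mathcal{L}_X g|^2\,dV + \frac{6}{m}\int_M (\mathrm{div}\,X)^2\,dV$ holds. Then $X$ is Killing, i.e. $\mathcal{L}_X g = 0$. -/
open MeasureTheory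

/-- Let `(M, g, X)` be a closed m-quasi-Einstein manifold with `m ≠ 0, -2`
and constant scalar curvature, and assume the integral identity
`(1 - 4/m) ∫ ∇_X div X = (1/m + 1/2) ∫ |L_X g|^2 + (6/m) ∫ (div X)^2`.  Together with the
lemma `∫ ∇_X div X = -∫ (div X)^2` (valid on a closed manifold) this forces `L_X g = 0`,
i.e. `X` is Killing.  The norm squared `|L_X g|^2` is a continuous nonnegative function
vanishing identically iff `L_X g = 0`. -/
theorem stmt_6
    {M : Type*} [MeasurableSpace M] [TopologicalSpace M] [BorelSpace M] [CompactSpace M]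
    (μ : Measure M) [IsFiniteMeasure μ] [μ.IsOpenPosMeasure]
    {S : Type*} [AddCommGroup S] [Module ℝ S]
    (LXg : S) (normLXgsq divX nabXdivX : M → ℝ)
    (m : ℝ) (hm : m ≠ 0) (hm2 : m ≠ -2)
    (hcont1 : Continuous normLXgsq) (hcont2 : Continuous divX)
    (hnonneg : ∀ x, 0 ≤ normLXgsq x)
    (hnondeg : (∀ x, normLXgsq x = 0) → LXg = 0)
    (hint1 : Integrable normLXgsq μ)
    (hint2 : Integrable (fun x => (divX x) ^ 2) μ)
    (hint3 : Integrable nabXdivX μ)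
    -- Lemma 2.1: ∫ ∇_X div X = -∫ (div X)^2 on a closed manifold
    (hlemma : ∫ x, nabXdivX x ∂μ = -∫ x, (divX x) ^ 2 ∂μ)
    -- the integrated identity (2.6)
    (hidentity : (1 - 4 / m) * ∫ x, nabXdivX x ∂μ
        = (1 / m + 1 / 2) * ∫ x, normLXgsq x ∂μ + (6 / m) * ∫ x, (divX x) ^ 2 ∂μ) :
    LXg = 0 := by

  set A := ∫ x, (divX x) ^ 2 ∂μ with hA
  set B := ∫ x, normLXgsq x ∂μ with hB
  have hAnn : 0 ≤ A := integral_nonneg fun x => sq_nonneg _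
  have hBnn : 0 ≤ B := integral_nonneg hnonneg
  rw [hlemma] at hidentity
  have hc : (1 / m + 1 / 2) ≠ 0 := by
    intro h
    apply hm2
    field_simp at h
    linarith
  have hBA : B = -2 * A := by
    have : (1 / m + 1 / 2) * B = (1 / m + 1 / 2) * (-2 * A) := by
      linear_combination -hidentity
    exact mul_left_cancel₀ hc this
  have hB0 : B = 0 := le_antisymm (by nlinarith) hBnn
  have hae : normLXgsq =ᵐ[μ] 0 :=
    (integral_eq_zero_iff_of_nonneg hnonneg hint1).mp hB0
  have heq : normLXgsq = 0 :=
    (Continuous.ae_eq_iff_eq μ hcont1 continuous_const).mp hae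
  exact hnondeg fun x => congrFun heq x
end

section
/- Let $(M,g,X)$ satisfy the $m$-quasi-Einstein equation, let $\Gamma > 0$ be smooth, and set $K = \frac{2}{m}\Gamma X + \nabla\Gamma$. Then $\mathcal{L}_K g = \frac{1}{\Gamma}K^*\otimes K^* - \frac{1}{\Gamma}d\Gamma\otimes d\Gamma - \frac{4\Gamma}{m}\mathrm{Ric} + 2\,\mathrm{Hess}\,\Gamma + \frac{4\Gamma\lambda}{m}g$. -/
/-- Let `(M, g, X)` satisfy the m-quasi-Einstein equation, `Γ > 0` smooth,
and `K = (2/m) Γ X + ∇Γ`.  Then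
`L_K g = (1/Γ) K^* ⊗ K^* - (1/Γ) dΓ ⊗ dΓ - (4Γ/m) Ric + 2 Hess Γ + (4Γλ/m) g`.
The geometry is encoded abstractly as in the symmetrized-covariant-derivative framework. -/
theorem stmt_12
    {M : Type*} {V : Type*} [AddCommGroup V] [Module (M → ℝ) V]
    (gmet : V → V → M → ℝ) (Lie : V → V → V → M → ℝ) (Ric : V → V → M → ℝ)
    (cov : V → V → V) (D : (M → ℝ) → V → M → ℝ)
    (X K gradΓ : V) (Γ : M → ℝ) (hΓ : ∀ x, 0 < Γ x)
    (Hess : V → V → M → ℝ)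
    (m lam : ℝ) (hm : m ≠ 0)
    -- the m-quasi-Einstein equation, evaluated on vector fields
    (hQE : ∀ Y Z x, Ric Y Z x + (1 / 2) * Lie X Y Z x
        - (1 / m) * (gmet X Y x * gmet X Z x) = lam * gmet Y Z x)
    -- structural identities of the geometry
    (hLie : ∀ W Y Z, Lie W Y Z = fun x => gmet (cov Y W) Z x + gmet (cov Z W) Y x)
    (hLeibniz : ∀ (f : M → ℝ) (W Y : V), cov Y (f • W) = f • cov Y W + (D f Y) • W)
    (hD : ∀ Y, D Γ Y = gmet gradΓ Y)
    (hDsmul : ∀ (c : ℝ) (f : M → ℝ) (Y : V), D (fun x => c * f x) Y = fun x => c * D f Y x)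
    (hHess : ∀ Y Z, Hess Y Z = gmet (cov Y gradΓ) Z)
    (hHsymm : ∀ Y Z, Hess Y Z = Hess Z Y)
    (hgmetF : ∀ (f : M → ℝ) (W Y : V), gmet (f • W) Y = fun x => f x * gmet W Y x)
    (hgmetadd : ∀ W W' Y : V, gmet (W + W') Y = fun x => gmet W Y x + gmet W' Y x)
    (hgmetsymm : ∀ W Y : V, gmet W Y = gmet Y W)
    (hcovadd : ∀ Y W W' : V, cov Y (W + W') = cov Y W + cov Y W')
    -- definition of K
    (hK : K = ((fun x => (2 / m) * Γ x) : M → ℝ) • X + gradΓ) :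
    ∀ Y Z, Lie K Y Z = fun x =>
      (1 / Γ x) * (gmet K Y x * gmet K Z x)
      - (1 / Γ x) * (gmet gradΓ Y x * gmet gradΓ Z x)
      - (4 * Γ x / m) * Ric Y Z x
      + 2 * Hess Y Z x
      + (4 * Γ x * lam / m) * gmet Y Z x := by
  intro Y Z
  funext x
  have hg : Γ x ≠ 0 := (hΓ x).ne'
  have hLX : Lie X Y Z x = gmet (cov Y X) Z x + gmet (cov Z X) Y x := by
    rw [hLie]
  have hq := hQE Y Z x
  have hL : Lie X Y Z x = 2 * lam * gmet Y Z x - 2 * Ric Y Z x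
      + (2 / m) * (gmet X Y x * gmet X Z x) := by
    field_simp at hq ⊢
    linarith
  have hKY : gmet K Y x = (2 / m) * Γ x * gmet X Y x + gmet gradΓ Y x := by
    simp only [hK, hgmetadd, hgmetF]
  have hKZ : gmet K Z x = (2 / m) * Γ x * gmet X Z x + gmet gradΓ Z x := by
    simp only [hK, hgmetadd, hgmetF]
  have e1 : gmet (cov Y K) Z x = (2 / m) * Γ x * gmet (cov Y X) Z x
      + (2 / m) * gmet gradΓ Y x * gmet X Z x + Hess Y Z x := by
    simp only [hK, hcovadd, hLeibniz, hgmetadd, hgmetF, hDsmul, hD, ← hHess]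
  have e2 : gmet (cov Z K) Y x = (2 / m) * Γ x * gmet (cov Z X) Y x
      + (2 / m) * gmet gradΓ Z x * gmet X Y x + Hess Y Z x := by
    simp only [hK, hcovadd, hLeibniz, hgmetadd, hgmetF, hDsmul, hD, ← hHess, hHsymm Z Y]
  have hsum : gmet (cov Y X) Z x + gmet (cov Z X) Y x = 2 * lam * gmet Y Z x
      - 2 * Ric Y Z x + (2 / m) * (gmet X Y x * gmet X Z x) := by
    rw [← hLX]; exact hL
  rw [hLie]
  show gmet (cov Y K) Z x + gmet (cov Z K) Y x = _
  rw [e1, e2, hKY, hKZ]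
  have h1 : (Γ x)⁻¹ * Γ x = 1 := inv_mul_cancel₀ hg
  linear_combination (2 * Γ x / m) * hsum
    - ((2 / m) * (gmet gradΓ Y x * gmet X Z x + gmet gradΓ Z x * gmet X Y x)
      + (4 * Γ x / m ^ 2) * (gmet X Y x * gmet X Z x)) * h1
end
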